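/- Let X be a metric space with at least two points and let f : X → X be a continuous map. Suppose that some subsequence of iterates of f converges uniformly to the identity: for every ε > 0 and every N ∈ ℕ there exists k ≥ N such that dist(f^[k](x), x) < ε for all x ∈ X. Then f is not topologically mixing; that is, it is not the case that for every pair of nonempty open sets U, V ⊆ X there exists N ∈ ℕ such that f^[k](U) ∩ V ≠ ∅ for all k ≥ N. -/
import Mathlib

/-- If a subsequence of the iterates of a continuous self-map `f` of a metric space with
at least two points converges uniformly to the identity, then `f` is not topologically
mixing. -/
theorem not_topologically_mixing_of_iterates_converge_to_id {X : Type*} [MetricSpace X]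
    (hX : ∃ x y : X, x ≠ y) (f : X → X) (hf : Continuous f)
    (hconv : ∀ ε : ℝ, 0 < ε → ∀ N : ℕ, ∃ k : ℕ, N ≤ k ∧ ∀ x : X, dist (f^[k] x) x < ε) :
    ¬ (∀ U V : Set X, IsOpen U → IsOpen V → U.Nonempty → V.Nonempty →
        ∃ N : ℕ, ∀ k : ℕ, N ≤ k → (f^[k] '' U ∩ V).Nonempty) := by
  intro h
  obtain ⟨x, y, hxy⟩ := hX
  have hd : 0 < dist x y := dist_pos.mpr hxy
  set ε := dist x y / 3 with hε
  have hεpos : 0 < ε := by positivity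
  obtain ⟨N, hN⟩ := h (Metric.ball x ε) (Metric.ball y ε) Metric.isOpen_ball
    Metric.isOpen_ball ⟨x, Metric.mem_ball_self hεpos⟩ ⟨y, Metric.mem_ball_self hεpos⟩
  obtain ⟨k, hkN, hk⟩ := hconv ε hεpos N
  obtain ⟨v, ⟨u, hu, huv⟩, hv⟩ := hN k hkN
  have h1 : dist x u < ε := by simpa [dist_comm] using hu
  have h2 : dist u (f^[k] u) < ε := by simpa [dist_comm] using hk u
  have h3 : dist (f^[k] u) y < ε := by simpa [huv] using hv
  have := dist_triangle4 x u (f^[k] u) y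
  linarith
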